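/- An oriented graph with no induced P⁺(3) and no induced P⁺(1,1,1) contains no odd hole. -/

import Mathlib

/-- The underlying simple graph of a digraph given by its arc relation. -/
def underlying {V : Type*} (A : V → V → Prop) : SimpleGraph V where
  Adj x y := x ≠ y ∧ (A x y ∨ A y x)
  symm := by refine ⟨?_⟩; intro x y h; exact ⟨h.1.symm, h.2.symm⟩
  loopless := by refine ⟨?_⟩; intro x h; exact h.1 rfl

theorem stmt18 {V : Type*} [Fintype V] (A : V → V → Prop)
    (hasym : ∀ x y, A x y → ¬ A y x)
    (hP3 : ¬ ∃ a b c d : V, A a b ∧ A b c ∧ A c d ∧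
      ¬ (underlying A).Adj a c ∧ ¬ (underlying A).Adj a d ∧
      ¬ (underlying A).Adj b d)
    (hP21 : ¬ ∃ a b c d : V, A a b ∧ A c b ∧ A c d ∧
      ¬ (underlying A).Adj a c ∧ ¬ (underlying A).Adj a d ∧
      ¬ (underlying A).Adj b d) :
    ¬ ∃ (n : ℕ) (v : ZMod n → V), 5 ≤ n ∧ Odd n ∧
      Function.Injective v ∧
      (∀ i : ZMod n, (underlying A).Adj (v i) (v (i + 1))) ∧
      (∀ i j : ZMod n, j ≠ i + 1 → i ≠ j + 1 → i ≠ j →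
        ¬ (underlying A).Adj (v i) (v j)) := by
  classical
  rintro ⟨n, v, h5, hodd, hinj, hadj, hnon⟩
  haveI : NeZero n := ⟨by omega⟩
  -- cancellation lemma for small shifts
  have kne : ∀ (j : ZMod n) (a b : ℕ), a < n → b < n → a ≠ b → j + (a : ZMod n) ≠ j + (b : ZMod n) := by
    intro j a b ha hb hab h
    have h2 : (a : ZMod n) = (b : ZMod n) := by exact add_left_cancel h
    apply hab
    calc a = (a : ZMod n).val := (ZMod.val_cast_of_lt ha).symm
    _ = (b : ZMod n).val := by rw [h2]
    _ = b := ZMod.val_cast_of_lt hb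
  have e21 : ∀ j : ZMod n, j + 2 ≠ j + 1 := by
    intro j; have := kne j 2 1 (by omega) (by omega) (by omega); simpa using this
  have e03 : ∀ j : ZMod n, j ≠ j + 3 := by
    intro j; have := kne j 0 3 (by omega) (by omega) (by omega); simpa using this
  have e02 : ∀ j : ZMod n, j ≠ j + 2 := by
    intro j; have := kne j 0 2 (by omega) (by omega) (by omega); simpa using this
  have e31 : ∀ j : ZMod n, j + 3 ≠ j + 1 := by
    intro j; have := kne j 3 1 (by omega) (by omega) (by omega); simpa using this
  have e04 : ∀ j : ZMod n, j ≠ j + 4 := by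
    intro j; have := kne j 0 4 (by omega) (by omega) (by omega); simpa using this
  have e32 : ∀ j : ZMod n, j + 3 ≠ j + 2 := by
    intro j; have := kne j 3 2 (by omega) (by omega) (by omega); simpa using this
  have e14 : ∀ j : ZMod n, j + 1 ≠ j + 4 := by
    intro j; have := kne j 1 4 (by omega) (by omega) (by omega); simpa using this
  have e13 : ∀ j : ZMod n, j + 1 ≠ j + 3 := by
    intro j; have := kne j 1 3 (by omega) (by omega) (by omega); simpa using this
  -- the three nonadjacencies and their symmetric versions
  have non02 : ∀ j : ZMod n, ¬ (underlying A).Adj (v j) (v (j + 2)) := by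
    intro j
    exact hnon j (j + 2) (e21 j)
      (by rw [show j + 2 + 1 = j + 3 from by ring]; exact e03 j) (e02 j)
  have non03 : ∀ j : ZMod n, ¬ (underlying A).Adj (v j) (v (j + 3)) := by
    intro j
    exact hnon j (j + 3) (e31 j)
      (by rw [show j + 3 + 1 = j + 4 from by ring]; exact e04 j) (e03 j)
  have non13 : ∀ j : ZMod n, ¬ (underlying A).Adj (v (j + 1)) (v (j + 3)) := by
    intro j
    apply hnon (j + 1) (j + 3)
    · rw [show j + 1 + 1 = j + 2 from by ring]; exact e32 j
    · rw [show j + 3 + 1 = j + 4 from by ring]; exact e14 j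
    · exact e13 j
  have non20 : ∀ j : ZMod n, ¬ (underlying A).Adj (v (j + 2)) (v j) :=
    fun j h => non02 j ((underlying A).adj_symm h)
  have non30 : ∀ j : ZMod n, ¬ (underlying A).Adj (v (j + 3)) (v j) :=
    fun j h => non03 j ((underlying A).adj_symm h)
  have non31 : ∀ j : ZMod n, ¬ (underlying A).Adj (v (j + 3)) (v (j + 1)) :=
    fun j h => non13 j ((underlying A).adj_symm h)
  -- edge orientation
  have hedge : ∀ i : ZMod n, A (v i) (v (i + 1)) ∨ A (v (i + 1)) (v i) := fun i => (hadj i).2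
  set d : ZMod n → Bool := fun i => decide (A (v i) (v (i + 1))) with hd
  -- there are two edges at distance 1 with the same orientation
  have key : ∃ i : ZMod n, d i = d (i + 2) := by
    by_contra hcon
    push_neg at hcon
    have hflip : ∀ i, d (i + 2) = !(d i) := by
      intro i
      have := hcon i
      revert this; cases d i <;> cases d (i + 2) <;> simp
    have hstep : ∀ k : ℕ, d ((2 * k : ℕ) : ZMod n) = (if Even k then d 0 else !(d 0)) := by
      intro k
      induction k with
      | zero => simp
      | succ k ih =>
        have hcast : ((2 * (k + 1) : ℕ) : ZMod n) = ((2 * k : ℕ) : ZMod n) + 2 := by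
          push_cast; ring
        rw [hcast, hflip, ih]
        rcases Nat.even_or_odd k with h | h
        · simp [h, Nat.even_add_one]
        · have h' : ¬ Even k := Nat.not_even_iff_odd.mpr h
          simp [Nat.even_add_one, h', Bool.not_not]
    have hn := hstep n
    have hcast0 : ((2 * n : ℕ) : ZMod n) = 0 := by
      push_cast [ZMod.natCast_self]; ring
    rw [hcast0, if_neg (Nat.not_even_iff_odd.mpr hodd)] at hn
    simp at hn
  obtain ⟨i, hi⟩ := key
  have h231 : (i + 2) + 1 = i + 3 := by ring
  cases hdi : d i with
  | true =>
    have hA1 : A (v i) (v (i + 1)) := by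
      have : d i = true := hdi
      simpa [hd] using this
    have hA2 : A (v (i + 2)) (v (i + 3)) := by
      have : d (i + 2) = true := by rw [← hi, hdi]
      rw [hd] at this
      simp only at this
      rw [h231] at this
      exact of_decide_eq_true this
    rcases hedge (i + 1) with hmid | hmid
    · -- A (v(i+1)) (v(i+2)) : P3 on i, i+1, i+2, i+3
      rw [show i + 1 + 1 = i + 2 by ring] at hmid
      exact hP3 ⟨v i, v (i + 1), v (i + 2), v (i + 3), hA1, hmid, hA2,
        non02 i, non03 i, non13 i⟩
    · -- A (v(i+2)) (v(i+1)) : P21 on a=i, b=i+1, c=i+2, d=i+3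
      rw [show i + 1 + 1 = i + 2 by ring] at hmid
      exact hP21 ⟨v i, v (i + 1), v (i + 2), v (i + 3), hA1, hmid, hA2,
        non02 i, non03 i, non13 i⟩
  | false =>
    have hA1 : A (v (i + 1)) (v i) := by
      have hnA : ¬ A (v i) (v (i + 1)) := by
        have : d i = false := hdi
        simpa [hd] using this
      exact (hedge i).resolve_left hnA
    have hA2 : A (v (i + 3)) (v (i + 2)) := by
      have hfalse : d (i + 2) = false := by rw [← hi, hdi]
      rw [hd] at hfalse
      simp only at hfalse
      rw [h231] at hfalse
      have hnA : ¬ A (v (i + 2)) (v (i + 3)) := of_decide_eq_false hfalse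
      have := hedge (i + 2)
      rw [h231] at this
      exact this.resolve_left hnA
    rcases hedge (i + 1) with hmid | hmid
    · -- A (v(i+1)) (v(i+2)) : P21 on a=i+3, b=i+2, c=i+1, d=i
      rw [show i + 1 + 1 = i + 2 by ring] at hmid
      exact hP21 ⟨v (i + 3), v (i + 2), v (i + 1), v i, hA2, hmid, hA1,
        non31 i, non30 i, non20 i⟩
    · -- A (v(i+2)) (v(i+1)) : P3 on i+3, i+2, i+1, i
      rw [show i + 1 + 1 = i + 2 by ring] at hmid
      exact hP3 ⟨v (i + 3), v (i + 2), v (i + 1), v i, hA2, hmid, hA1,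
        non31 i, non30 i, non20 i⟩
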